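/- Every flat ABA+ framework satisfying the Axiom of Contraposition admits at least one <-preferred extension (a ⊆-maximal <-admissible set), via a Zorn's Lemma argument: the union of any ⊆-chain of <-admissible sets is <-admissible. -/

import Mathlib

/-- A rule with a head and a (finite) body. A rule with empty body is a fact `head ← ⊤`. -/
structure ABARule (L : Type) where
  head : L
  body : List L

/-- Derivability (existence of a finite deduction tree) of a formula from a support set `S`
using rules in `Rs`: leaves are in `S` (or `⊤`, i.e. rules with empty body). -/
inductive Deduces {L : Type} (Rs : Set (ABARule L)) (S : Set L) : L → Prop
  | assumption {φ : L} (h : φ ∈ S) : Deduces Rs S φ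
  | rule {r : ABARule L} (hr : r ∈ Rs) (h : ∀ b ∈ r.body, Deduces Rs S b) :
      Deduces Rs S r.head

/-- An ABA⁺ framework: deductive system `(L, rules)`, non-empty set of assumptions,
total contrary map, and a preorder `le` on the assumptions. -/
structure ABAFramework (L : Type) where
  rules : Set (ABARule L)
  assumptions : Set L
  assumptions_nonempty : assumptions.Nonempty
  contrary : L → L
  le : L → L → Prop
  le_refl : ∀ a ∈ assumptions, le a a
  le_trans : ∀ a ∈ assumptions, ∀ b ∈ assumptions, ∀ c ∈ assumptions,
      le a b → le b c → le a c

namespace ABAFramework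

variable {L : Type}

/-- Strict part of the preference preorder. -/
def lt (F : ABAFramework L) (a b : L) : Prop := F.le a b ∧ ¬ F.le b a

/-- Standard (preference-free) ABA attack: some `A' ⊆ A` deduces the contrary of some `β ∈ B`. -/
def attacks (F : ABAFramework L) (A B : Set L) : Prop :=
  ∃ β ∈ B, ∃ A' ⊆ A, Deduces F.rules A' (F.contrary β)

/-- `<`-attack: normal attack or reverse attack. -/
def ltAttacks (F : ABAFramework L) (A B : Set L) : Prop :=
  (∃ β ∈ B, ∃ A' ⊆ A, Deduces F.rules A' (F.contrary β) ∧ ∀ α' ∈ A', ¬ F.lt α' β) ∨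
  (∃ α ∈ A, ∃ B' ⊆ B, Deduces F.rules B' (F.contrary α) ∧ ∃ β' ∈ B', F.lt β' α)

def conflictFree (F : ABAFramework L) (E : Set L) : Prop := ¬ F.attacks E E

def ltConflictFree (F : ABAFramework L) (E : Set L) : Prop := ¬ F.ltAttacks E E

def ltDefends (F : ABAFramework L) (E : Set L) (α : L) : Prop :=
  ∀ B ⊆ F.assumptions, F.ltAttacks B {α} → F.ltAttacks E B

def ltAdmissible (F : ABAFramework L) (E : Set L) : Prop :=
  E ⊆ F.assumptions ∧ F.ltConflictFree E ∧ ∀ α ∈ E, F.ltDefends E α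

def stable (F : ABAFramework L) (E : Set L) : Prop :=
  E ⊆ F.assumptions ∧ F.conflictFree E ∧
    ∀ β ∈ F.assumptions, β ∉ E → F.attacks E {β}

def ltStable (F : ABAFramework L) (E : Set L) : Prop :=
  E ⊆ F.assumptions ∧ F.ltConflictFree E ∧
    ∀ β ∈ F.assumptions, β ∉ E → F.ltAttacks E {β}

def ltComplete (F : ABAFramework L) (E : Set L) : Prop :=
  F.ltAdmissible E ∧ ∀ α ∈ F.assumptions, F.ltDefends E α → α ∈ E

def ltPreferred (F : ABAFramework L) (E : Set L) : Prop :=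
  F.ltAdmissible E ∧ ∀ E', F.ltAdmissible E' → E ⊆ E' → E' = E

def ltGrounded (F : ABAFramework L) (E : Set L) : Prop :=
  F.ltComplete E ∧ ∀ E', F.ltComplete E' → E' ⊆ E → E' = E

/-- `E` is `<`-admissible and contained in all `<`-preferred extensions. -/
def ltIdealCandidate (F : ABAFramework L) (E : Set L) : Prop :=
  F.ltAdmissible E ∧ ∀ P, F.ltPreferred P → E ⊆ P

def ltIdeal (F : ABAFramework L) (E : Set L) : Prop :=
  F.ltIdealCandidate E ∧ ∀ E', F.ltIdealCandidate E' → E ⊆ E' → E' = E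

/-- Flatness: no assumption is the head of any rule. -/
def Flat (F : ABAFramework L) : Prop := ∀ r ∈ F.rules, r.head ∉ F.assumptions

/-- Axiom of Contraposition. -/
def Contraposition (F : ABAFramework L) : Prop :=
  ∀ A' ⊆ F.assumptions, ∀ β ∈ F.assumptions,
    Deduces F.rules A' (F.contrary β) →
      ∀ α ∈ A', Deduces F.rules ((A' \ {α}) ∪ {β}) (F.contrary α)

/-- Axiom of Weak Contraposition. -/
def WeakContraposition (F : ABAFramework L) : Prop :=
  ∀ A' ⊆ F.assumptions, ∀ β ∈ F.assumptions,
    Deduces F.rules A' (F.contrary β) → (∃ α ∈ A', F.lt α β) →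
      ∃ α ∈ A', F.lt α β ∧ Deduces F.rules ((A' \ {α}) ∪ {β}) (F.contrary α)

/-- The `<`-defence operator `Def`. -/
def DefOp (F : ABAFramework L) (A : Set L) : Set L :=
  {α ∈ F.assumptions | F.ltDefends A α}

/-- Conclusions of a set `E`. -/
def Cn (F : ABAFramework L) (E : Set L) : Set L :=
  {φ | ∃ S ⊆ E, Deduces F.rules S φ}

end ABAFramework

open ABAFramework

lemma deduces_mono {L : Type} {Rs : Set (ABARule L)} {S S' : Set L} (hSS : S ⊆ S') {φ : L}
    (h : Deduces Rs S φ) : Deduces Rs S' φ := by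
  induction h with
  | assumption h => exact Deduces.assumption (hSS h)
  | rule hr h ih => exact Deduces.rule hr ih

lemma deduces_finite {L : Type} {Rs : Set (ABARule L)} {S : Set L} {φ : L}
    (h : Deduces Rs S φ) : ∃ T ⊆ S, T.Finite ∧ Deduces Rs T φ := by
  induction h with
  | @assumption φ h =>
    exact ⟨{φ}, Set.singleton_subset_iff.2 h, Set.finite_singleton _,
      Deduces.assumption rfl⟩
  | @rule r hr h ih =>
    have key : ∀ b : L, ∃ T : Set L,
        (b ∈ r.body → (T ⊆ S ∧ T.Finite ∧ Deduces Rs T b)) := by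
      intro b
      by_cases hb : b ∈ r.body
      · obtain ⟨T, h1, h2, h3⟩ := ih b hb
        exact ⟨T, fun _ => ⟨h1, h2, h3⟩⟩
      · exact ⟨∅, fun h => absurd h hb⟩
    choose T hT using key
    refine ⟨⋃ b ∈ r.body, T b, ?_, ?_, ?_⟩
    · exact Set.iUnion₂_subset fun b hb => (hT b hb).1
    · exact (r.body.finite_toSet).biUnion fun b hb => (hT b hb).2.1
    · refine Deduces.rule hr fun b hb => ?_
      exact deduces_mono (Set.subset_biUnion_of_mem (u := T) hb) (hT b hb).2.2

lemma chain_finite_subset {L : Type} {C : Set (Set L)} (hC : IsChain (· ⊆ ·) C)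
    (hne : C.Nonempty) {T : Set L} (hfin : T.Finite) (hsub : T ⊆ ⋃₀ C) :
    ∃ X ∈ C, T ⊆ X := by
  classical
  revert hsub
  refine Set.Finite.induction_on (motive := fun T _ => T ⊆ ⋃₀ C → ∃ X ∈ C, T ⊆ X) T hfin (fun _ => hne.imp fun X hX => ⟨hX, by simp⟩) ?_
  intro a s _ _ ih hsub
  obtain ⟨X, hXC, hsX⟩ := ih fun x hx => hsub (Set.mem_insert_of_mem _ hx)
  obtain ⟨Y, hYC, haY⟩ := hsub (Set.mem_insert a s)
  by_cases hXY : X = Y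
  · exact ⟨Y, hYC, Set.insert_subset haY (hXY ▸ hsX)⟩
  rcases hC hXC hYC hXY with h | h
  · exact ⟨Y, hYC, Set.insert_subset haY (hsX.trans h)⟩
  · exact ⟨X, hXC, Set.insert_subset (h haY) hsX⟩

lemma ltAttacks_mono {L : Type} (F : ABAFramework L) {A A' B : Set L} (h : A ⊆ A') :
    F.ltAttacks A B → F.ltAttacks A' B := by
  rintro (⟨β, hβ, S, hS, hd, hn⟩ | ⟨α, hα, S, hS, hd, hb⟩)
  · exact Or.inl ⟨β, hβ, S, hS.trans h, hd, hn⟩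
  · exact Or.inr ⟨α, h hα, S, hS, hd, hb⟩

theorem stmt8 {L : Type} (F : ABAFramework L) (hflat : F.Flat)
    (hcp : F.Contraposition) :
    (∀ C : Set (Set L), (∀ X ∈ C, F.ltAdmissible X) → IsChain (· ⊆ ·) C →
        F.ltAdmissible (⋃₀ C)) ∧
    (∃ E : Set L, F.ltPreferred E) := by
  have main : ∀ C : Set (Set L), (∀ X ∈ C, F.ltAdmissible X) → IsChain (· ⊆ ·) C →
      F.ltAdmissible (⋃₀ C) := by
    intro C hadm hchain
    refine ⟨?_, ?_, ?_⟩
    · rintro x ⟨X, hX, hxX⟩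
      exact (hadm X hX).1 hxX
    · rintro (⟨β, hβ, A', hA', hd, hnlt⟩ | ⟨α, hα, B', hB', hd, β', hβ', hlt⟩)
      · obtain ⟨X₀, hX₀C, hβX₀⟩ := hβ
        obtain ⟨T, hTA', hTfin, hTd⟩ := deduces_finite hd
        obtain ⟨X₁, hX₁C, hTX₁⟩ :=
          chain_finite_subset hchain ⟨X₀, hX₀C⟩ hTfin (hTA'.trans hA')
        have hatt : ∀ X ∈ C, β ∈ X → T ⊆ X → False := by
          intro X hXC hβX hTX
          exact (hadm X hXC).2.1
            (Or.inl ⟨β, hβX, T, hTX, hTd, fun α' hα' => hnlt α' (hTA' hα')⟩)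
        by_cases hXY : X₀ = X₁
        · exact hatt X₁ hX₁C (hXY ▸ hβX₀) hTX₁
        rcases hchain hX₀C hX₁C hXY with h | h
        · exact hatt X₁ hX₁C (h hβX₀) hTX₁
        · exact hatt X₀ hX₀C hβX₀ (hTX₁.trans h)
      · obtain ⟨X₀, hX₀C, hαX₀⟩ := hα
        obtain ⟨T, hTB', hTfin, hTd⟩ := deduces_finite hd
        have hT'fin : (T ∪ {β'}).Finite := hTfin.union (Set.finite_singleton _)
        have hT'B' : T ∪ {β'} ⊆ B' :=
          Set.union_subset hTB' (Set.singleton_subset_iff.2 hβ')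
        obtain ⟨X₁, hX₁C, hTX₁⟩ :=
          chain_finite_subset hchain ⟨X₀, hX₀C⟩ hT'fin (hT'B'.trans hB')
        have hatt : ∀ X ∈ C, α ∈ X → T ∪ {β'} ⊆ X → False := by
          intro X hXC hαX hTX
          exact (hadm X hXC).2.1
            (Or.inr ⟨α, hαX, T ∪ {β'}, hTX, deduces_mono Set.subset_union_left hTd,
              β', Or.inr rfl, hlt⟩)
        by_cases hXY : X₀ = X₁
        · exact hatt X₁ hX₁C (hXY ▸ hαX₀) hTX₁
        rcases hchain hX₀C hX₁C hXY with h | h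
        · exact hatt X₁ hX₁C (h hαX₀) hTX₁
        · exact hatt X₀ hX₀C hαX₀ (hTX₁.trans h)
    · rintro α ⟨X, hXC, hαX⟩ B hB hattB
      exact ltAttacks_mono F (Set.subset_sUnion_of_mem hXC)
        ((hadm X hXC).2.2 α hαX B hB hattB)
  refine ⟨main, ?_⟩
  obtain ⟨E, hE⟩ := zorn_subset {E : Set L | F.ltAdmissible E} (fun c hc hchain =>
    ⟨⋃₀ c, main c (fun X hX => hc hX) hchain, fun s hs => Set.subset_sUnion_of_mem hs⟩)
  exact ⟨E, hE.1, fun E' hE' hEE' => subset_antisymm (hE.2 hE' hEE') hEE'⟩
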